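/- arXiv:1205.7066 — 3 statements merged into one kernel-verified Lean document; each statement's English description precedes it below -/
import Mathlib

section
/- Let ξ, σ ∈ ℝ with ξ ≠ 0 and μ ∈ ℝ² , and define s = (|μ|² − σ² + ξ²) + 2iξσ ∈ ℂ and m = (ξ + iσ)/√s (taking the branch of the square root with positive real part). Then |m| ≤ 2·(1 + |μ|²/ξ²)^{1/4}. -/
open Complex

/-- Multiplier bound for the Fourier–Laplace symbol in the hidden trace
regularity lemma: with `s = (|μ|² − σ² + ξ²) + 2iξσ` and
`m = (ξ + iσ)/√s`, one has `|m| ≤ 2 (1 + |μ|²/ξ²)^{1/4}`. -/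
theorem stmt_0 (ξ σ : ℝ) (hξ : ξ ≠ 0) (μ : EuclideanSpace ℝ (Fin 2)) :
    ‖((ξ + σ * Complex.I) /
      ((((‖μ‖ ^ 2 - σ ^ 2 + ξ ^ 2 : ℝ) : ℂ) + 2 * ξ * σ * Complex.I) ^ ((1 : ℂ) / 2)) : ℂ)‖
      ≤ 2 * (1 + ‖μ‖ ^ 2 / ξ ^ 2) ^ ((1 : ℝ) / 4) := by
  set a : ℝ := ‖μ‖ ^ 2 with ha_def
  have ha : 0 ≤ a := sq_nonneg _
  have hx : 0 < ξ ^ 2 := by positivity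
  have hrw : (((a - σ ^ 2 + ξ ^ 2 : ℝ) : ℂ) + 2 * ξ * σ * Complex.I)
      = (((a - σ ^ 2 + ξ ^ 2 : ℝ) : ℂ) + ((2 * ξ * σ : ℝ) : ℂ) * Complex.I) := by
    push_cast; ring
  rw [norm_div, hrw]
  have h2 : ‖(ξ : ℂ) + (σ : ℝ) * Complex.I‖ = Real.sqrt (ξ ^ 2 + σ ^ 2) :=
    Complex.norm_add_mul_I ξ σ
  have h3 : ‖((a - σ ^ 2 + ξ ^ 2 : ℝ) : ℂ) + ((2 * ξ * σ : ℝ) : ℂ) * Complex.I‖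
      = Real.sqrt ((a - σ ^ 2 + ξ ^ 2) ^ 2 + (2 * ξ * σ) ^ 2) :=
    Complex.norm_add_mul_I _ _
  have h1 : ‖(((a - σ ^ 2 + ξ ^ 2 : ℝ) : ℂ) + ((2 * ξ * σ : ℝ) : ℂ) * Complex.I)
      ^ ((1 : ℂ) / 2)‖
      = (Real.sqrt ((a - σ ^ 2 + ξ ^ 2) ^ 2 + (2 * ξ * σ) ^ 2)) ^ ((1 : ℝ) / 2) := by
    rw [show ((1 : ℂ) / 2) = (((1 : ℝ) / 2 : ℝ) : ℂ) by norm_num, Complex.norm_cpow_real, h3]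
  rw [h1, h2]
  set D : ℝ := (a - σ ^ 2 + ξ ^ 2) ^ 2 + (2 * ξ * σ) ^ 2 with hD_def
  have hD : 0 < D := by
    rcases eq_or_ne σ 0 with h | h
    · have : 0 < a - σ ^ 2 + ξ ^ 2 := by rw [h]; nlinarith
      positivity
    · have : 0 < (2 * ξ * σ) ^ 2 := by positivity
      nlinarith [sq_nonneg (a - σ ^ 2 + ξ ^ 2)]
  have hc : 0 ≤ 1 + a / ξ ^ 2 := by positivity
  apply le_of_pow_le_pow_left₀ (n := 4) (by norm_num)
    (by positivity)
  have hLHS : (Real.sqrt (ξ ^ 2 + σ ^ 2) / Real.sqrt D ^ ((1 : ℝ) / 2)) ^ 4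
      = (ξ ^ 2 + σ ^ 2) ^ 2 / D := by
    rw [div_pow]
    congr 1
    · rw [show (4 : ℕ) = 2 * 2 by rfl, pow_mul,
        Real.sq_sqrt (by positivity : (0:ℝ) ≤ ξ ^ 2 + σ ^ 2)]
    · rw [← Real.rpow_natCast (Real.sqrt D ^ ((1:ℝ)/2)) 4,
        ← Real.rpow_mul (Real.sqrt_nonneg _)]
      norm_num
      exact Real.sq_sqrt hD.le
  have hRHS : (2 * (1 + a / ξ ^ 2) ^ ((1 : ℝ) / 4)) ^ 4
      = 16 * (1 + a / ξ ^ 2) := by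
    rw [mul_pow, ← Real.rpow_natCast ((1 + a / ξ ^ 2) ^ ((1:ℝ)/4)) 4,
      ← Real.rpow_mul hc]
    norm_num
  rw [hLHS, hRHS]
  rw [div_le_iff₀ hD]
  have key : (ξ ^ 2 + σ ^ 2) ^ 2 * ξ ^ 2 ≤ 16 * (ξ ^ 2 + a) * D := by
    have ht : 0 ≤ σ ^ 2 := sq_nonneg _
    nlinarith [sq_nonneg (a - σ ^ 2 + ξ ^ 2), sq_nonneg (a - σ ^ 2 - ξ ^ 2),
      mul_nonneg ha ht, mul_nonneg (mul_nonneg ha ht) hx.le,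
      mul_nonneg ha hx.le, mul_nonneg ht hx.le,
      mul_nonneg ha (sq_nonneg (a - σ ^ 2 + ξ ^ 2)),
      sq_nonneg (ξ ^ 2 - σ ^ 2), mul_nonneg hx.le (sq_nonneg (ξ ^ 2 - σ ^ 2)),
      mul_nonneg ha (sq_nonneg (ξ ^ 2 + σ ^ 2))]
  have h16 : 16 * (1 + a / ξ ^ 2) * D = (16 * (ξ ^ 2 + a) * D) / ξ ^ 2 := by
    field_simp
  rw [h16, le_div_iff₀ hx]
  nlinarith [key, hD.le]
end

section
/- Fix U > 1 and μ > 0, and set c_U = U² − 1. There exist r > 0 and c₀ > 0 such that for all ω ∈ ℝ and k ∈ ℝ², |−c_U ω² + i r U ω + |k|² + μ|² ≥ c₀·(|k|² + ω² + 1). -/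
lemma stmt_3_aux (U μ c a ω : ℝ) (hU : 1 < U) (hμ : 0 < μ)
    (hcdef : c = U ^ 2 - 1) (ha : 0 ≤ a) :
    min (c * μ ^ 2 / (2 * (2 * c * μ + 2 * c + μ))) (U ^ 2 * μ / ((2 * c + 1) * μ + 2 * c))
      * (a + ω ^ 2 + 1) ≤ (a + μ - c * ω ^ 2) ^ 2 + (1 * U * ω) ^ 2 := by
  have hc : 0 < c := by nlinarith
  have hU0 : 0 < U := by linarith
  have hS : 0 < 2 * (2 * c * μ + 2 * c + μ) := by positivity
  have hT : 0 < (2 * c + 1) * μ + 2 * c := by positivity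
  have hX : 0 ≤ a + ω ^ 2 + 1 := by positivity
  rcases le_or_gt (c * ω ^ 2) ((a + μ) / 2) with h | h
  · have hb : (a + μ) / 2 ≤ a + μ - c * ω ^ 2 := by linarith
    have hb0 : (0:ℝ) ≤ (a + μ) / 2 := by linarith
    have hb2 : (a + μ) / 2 * ((a + μ) / 2) ≤ (a + μ - c * ω ^ 2) ^ 2 := by
      rw [sq]; exact mul_le_mul hb hb hb0 (by linarith)
    have key : c * μ ^ 2 / (2 * (2 * c * μ + 2 * c + μ)) * (a + ω ^ 2 + 1) ≤
        (a + μ - c * ω ^ 2) ^ 2 := by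
      rw [div_mul_eq_mul_div, div_le_iff₀ hS]
      nlinarith [hb2, mul_le_mul_of_nonneg_left h (sq_nonneg μ),
        mul_nonneg (mul_nonneg hc.le hμ.le) (sq_nonneg a),
        mul_nonneg (mul_nonneg (mul_nonneg hc.le hμ.le) hμ.le) ha,
        mul_nonneg hc.le (mul_nonneg ha ha),
        mul_nonneg (mul_nonneg hc.le hμ.le) ha,
        mul_nonneg (mul_nonneg hμ.le hμ.le) ha,
        mul_nonneg hμ.le (mul_nonneg ha ha),
        mul_pos hc hμ, mul_pos (mul_pos hc hμ) hμ]
    refine le_trans (mul_le_mul_of_nonneg_right (min_le_left _ _) hX) (le_trans key ?_)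
    nlinarith [sq_nonneg (1 * U * ω)]
  · have h1 : μ * a ≤ 2 * c * μ * ω ^ 2 - μ ^ 2 := by
      nlinarith [mul_lt_mul_of_pos_left h hμ]
    have h2 : μ ≤ 2 * c * ω ^ 2 := by nlinarith
    have key : U ^ 2 * μ / ((2 * c + 1) * μ + 2 * c) * (a + ω ^ 2 + 1) ≤
        (1 * U * ω) ^ 2 := by
      rw [div_mul_eq_mul_div, div_le_iff₀ hT]
      nlinarith [mul_le_mul_of_nonneg_left h1 (sq_nonneg U),
        mul_le_mul_of_nonneg_left h2 (sq_nonneg U),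
        mul_nonneg (sq_nonneg U) (mul_nonneg hμ.le (sq_nonneg ω)),
        sq_nonneg (U * ω)]
    refine le_trans (mul_le_mul_of_nonneg_right (min_le_right _ _) hX) (le_trans key ?_)
    nlinarith [sq_nonneg (a + μ - c * ω ^ 2)]

/-- Lower bound on the Fourier symbol of the shifted supersonic static flow
operator: for `U > 1`, `μ > 0`, `c_U = U² − 1`, there are `r, c₀ > 0` with
`|−c_U ω² + i r U ω + |k|² + μ|² ≥ c₀ (|k|² + ω² + 1)` for all `ω ∈ ℝ`,
`k ∈ ℝ²`. -/
theorem stmt_3 (U μ : ℝ) (hU : 1 < U) (hμ : 0 < μ) :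
    ∃ r > (0 : ℝ), ∃ c₀ > (0 : ℝ), ∀ (ω : ℝ) (k : EuclideanSpace ℝ (Fin 2)),
      c₀ * (‖k‖ ^ 2 + ω ^ 2 + 1) ≤
        ‖((‖k‖ ^ 2 + μ - (U ^ 2 - 1) * ω ^ 2 : ℝ) : ℂ)
          + (r * U * ω : ℝ) * Complex.I‖ ^ 2 := by
  have hc : 0 < U ^ 2 - 1 := by nlinarith
  have hU0 : 0 < U := by linarith
  refine ⟨1, one_pos,
    min ((U ^ 2 - 1) * μ ^ 2 / (2 * (2 * (U ^ 2 - 1) * μ + 2 * (U ^ 2 - 1) + μ)))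
      (U ^ 2 * μ / ((2 * (U ^ 2 - 1) + 1) * μ + 2 * (U ^ 2 - 1))),
    lt_min (by positivity) (by positivity), ?_⟩
  intro ω k
  rw [Complex.sq_norm, Complex.normSq_add_mul_I]
  exact stmt_3_aux U μ (U ^ 2 - 1) (‖k‖ ^ 2) ω hU hμ rfl (by positivity)
end

section
/- Let Ω ⊂ ℝ² be a bounded domain with diameter d, and let u ∈ C²(Ω̄) with u = 0 on ∂Ω. Then max_{x∈Ω̄} |u(x)| ≤ (d/√π)·‖[u,u]‖_{L¹(Ω)}^{1/2}, where [u,u] = 2(u_{xx}u_{yy} − u_{xy}²) is the Monge–Ampère expression (the von Karman bracket of u with itself). -/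
open MeasureTheory Metric Real
open scoped RealInnerProductSpace

noncomputable section
namespace Stmt13

abbrev E2 := EuclideanSpace ℝ (Fin 2)

def ee (i : Fin 2) : E2 := EuclideanSpace.single i 1

def LL : (E2 →L[ℝ] ℝ) →L[ℝ] E2 :=
  ((PiLp.continuousLinearEquiv 2 ℝ (fun _ : Fin 2 => ℝ)).symm.toContinuousLinearMap).comp
    (ContinuousLinearMap.pi fun i => ContinuousLinearMap.apply ℝ ℝ (ee i))

lemma LL_apply (φ : E2 →L[ℝ] ℝ) (i : Fin 2) : LL φ i = φ (ee i) := rfl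

lemma clm_det (T : E2 →L[ℝ] E2) :
    T.det = (T (ee 0)) 0 * (T (ee 1)) 1 - (T (ee 1)) 0 * (T (ee 0)) 1 := by
  have hb : ∀ (j : Fin 2), ((EuclideanSpace.basisFun (Fin 2) ℝ).toBasis : Module.Basis (Fin 2) ℝ E2) j
      = ee j := by
    intro j
    rw [OrthonormalBasis.coe_toBasis]
    simp [ee]
  rw [ContinuousLinearMap.det, ← LinearMap.det_toMatrix
    (EuclideanSpace.basisFun (Fin 2) ℝ).toBasis, Matrix.det_fin_two]
  simp only [LinearMap.toMatrix_apply, hb]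
  simp [OrthonormalBasis.coe_toBasis_repr_apply, ContinuousLinearMap.coe_coe]

lemma vol_ball (r : ℝ) (hr : 0 ≤ r) :
    volume (Metric.ball (0:E2) r) = ENNReal.ofReal (π * r ^ 2) := by
  rw [EuclideanSpace.volume_ball]
  norm_num
  rw [← ENNReal.ofReal_pow hr, ← ENNReal.ofReal_pow (Real.sqrt_nonneg _), Real.sq_sqrt Real.pi_nonneg, ← ENNReal.ofReal_mul (by positivity)]
  ring_nf

end Stmt13
end

open Stmt13 in
/-- Maximum principle for the Monge–Ampère expression (von Karman bracket):
for a bounded domain `Ω ⊂ ℝ²` of diameter `d` and `u ∈ C²` vanishing on `∂Ω`,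
`max_{Ω̄} |u| ≤ (d/√π) ‖[u,u]‖_{L¹(Ω)}^{1/2}` where
`[u,u] = 2(u_{xx}u_{yy} − u_{xy}²)`. -/
theorem stmt_13 (Ω : Set (EuclideanSpace ℝ (Fin 2)))
    (hopen : IsOpen Ω) (hconn : IsConnected Ω) (hbdd : Bornology.IsBounded Ω)
    (u : EuclideanSpace ℝ (Fin 2) → ℝ) (hu : ContDiff ℝ 2 u)
    (hbc : ∀ x ∈ frontier Ω, u x = 0) :
    ∀ x ∈ closure Ω,
      |u x| ≤ (Metric.diam Ω / Real.sqrt Real.pi) *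
        Real.sqrt (∫ y in Ω,
          |2 * (fderiv ℝ (fun z => fderiv ℝ u z (EuclideanSpace.single 0 1)) y
                  (EuclideanSpace.single 0 1) *
                fderiv ℝ (fun z => fderiv ℝ u z (EuclideanSpace.single 1 1)) y
                  (EuclideanSpace.single 1 1) -
                (fderiv ℝ (fun z => fderiv ℝ u z (EuclideanSpace.single 0 1)) y
                  (EuclideanSpace.single 1 1)) ^ 2)|) := by
  intro x₀ hx₀
  classical
  have hdiff : Differentiable ℝ u := hu.differentiable (by norm_num)
  have hd1 : ContDiff ℝ 1 (fderiv ℝ u) := hu.fderiv_right (by norm_num)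
  have hf'd : Differentiable ℝ (fderiv ℝ u) := hd1.differentiable (by norm_num)
  have hf''c : Continuous (fderiv ℝ (fderiv ℝ u)) := hd1.continuous_fderiv (by norm_num)
  -- rewrite iterated directional derivatives via the full second derivative
  have hsec : ∀ (w y : E2), fderiv ℝ (fun z => fderiv ℝ u z w) y
      = (ContinuousLinearMap.apply ℝ ℝ w).comp (fderiv ℝ (fderiv ℝ u) y) := by
    intro w y
    exact (((ContinuousLinearMap.apply ℝ ℝ w).hasFDerivAt).comp y (hf'd y).hasFDerivAt).fderiv
  simp only [hsec, ContinuousLinearMap.coe_comp', Function.comp_apply,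
    ContinuousLinearMap.apply_apply]
  -- trivial case
  rcases (abs_nonneg (u x₀)).eq_or_lt with h0 | hM
  · rw [← h0]
    exact mul_nonneg (div_nonneg Metric.diam_nonneg (Real.sqrt_nonneg _)) (Real.sqrt_nonneg _)
  -- the diameter is positive
  obtain ⟨z, hz⟩ := hconn.nonempty
  obtain ⟨ε, hε, hball⟩ := Metric.isOpen_iff.1 hopen z hz
  have hz2 : z + (ε/2) • (EuclideanSpace.single 0 1 : E2) ∈ Ω := by
    apply hball
    rw [Metric.mem_ball, dist_self_add_left, norm_smul, EuclideanSpace.norm_single]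
    simp [abs_of_pos hε]
    linarith
  have hd : 0 < Metric.diam Ω := by
    have h1 := Metric.dist_le_diam_of_mem hbdd hz2 hz
    rw [dist_self_add_left, norm_smul, EuclideanSpace.norm_single] at h1
    simp [abs_of_pos hε] at h1
    linarith
  set d := Metric.diam Ω with hd_def
  set ρ := |u x₀| / d with hρ_def
  have hρ0 : 0 ≤ ρ := div_nonneg (abs_nonneg _) hd.le
  -- the gradient map
  set G : E2 → E2 := fun x => LL (fderiv ℝ u x) with hG_def
  have hG : ∀ y : E2, HasFDerivAt G (LL.comp (fderiv ℝ (fderiv ℝ u) y)) y :=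
    fun y => LL.hasFDerivAt.comp y (hf'd y).hasFDerivAt
  -- the ball of radius ρ is contained in the gradient image
  have hsub : Metric.ball (0:E2) ρ ⊆ G '' Ω := by
    intro p hp
    rw [Metric.mem_ball, dist_zero_right] at hp
    set s : ℝ := if 0 ≤ u x₀ then 1 else -1 with hs_def
    have hsu : s * u x₀ = |u x₀| := by
      rw [hs_def]; split_ifs with h
      · rw [one_mul, abs_of_nonneg h]
      · rw [abs_of_neg (lt_of_not_ge h)]; ring
    have hs1 : |s| = 1 := by rw [hs_def]; split_ifs <;> norm_num
    have hsne : s ≠ 0 := by intro h; rw [h] at hs1; norm_num at hs1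
    set q : E2 := s • p with hq_def
    have hq : ‖q‖ < ρ := by rw [hq_def, norm_smul, Real.norm_eq_abs, hs1, one_mul]; exact hp
    set v : E2 → ℝ := fun x => s * u x - (innerSL ℝ q) x with hv_def
    have hvc : Continuous v :=
      (continuous_const.mul hdiff.continuous).sub (innerSL ℝ q).continuous
    obtain ⟨x₁, hx₁K, hmax⟩ :=
      (hbdd.isCompact_closure).exists_isMaxOn ⟨x₀, hx₀⟩ hvc.continuousOn
    have hkey : ∀ y ∈ frontier Ω, v y < v x₀ := by
      intro y hy
      have hdist : dist x₀ y ≤ d := by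
        have := Metric.dist_le_diam_of_mem hbdd.closure hx₀ (frontier_subset_closure hy)
        rwa [Metric.diam_closure] at this
      have hinner : ⟪q, x₀ - y⟫ ≤ ‖q‖ * d := by
        calc ⟪q, x₀ - y⟫ ≤ ‖q‖ * ‖x₀ - y‖ := real_inner_le_norm q _
          _ ≤ ‖q‖ * d := by
              rw [← dist_eq_norm]
              exact mul_le_mul_of_nonneg_left hdist (norm_nonneg _)
      have hqd : ‖q‖ * d < |u x₀| := by
        rw [hρ_def] at hq
        calc ‖q‖ * d < (|u x₀| / d) * d := by exact mul_lt_mul_of_pos_right hq hd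
          _ = |u x₀| := div_mul_cancel₀ _ hd.ne'
      have hvy : v y = - ⟪q, y⟫ := by
        rw [hv_def]; simp [hbc y hy, innerSL_apply_apply]
      have hvx : v x₀ = |u x₀| - ⟪q, x₀⟫ := by
        rw [hv_def]; simp [hsu, innerSL_apply_apply]
      rw [hvy, hvx]
      rw [inner_sub_right] at hinner
      linarith
    have hx₁Ω : x₁ ∈ Ω := by
      by_contra h
      have hfr : x₁ ∈ frontier Ω := by
        constructor
        · exact hx₁K
        · rwa [hopen.interior_eq]
      have h1 : v x₀ ≤ v x₁ := hmax hx₀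
      have h2 := hkey x₁ hfr
      linarith
    have hloc : IsLocalMax v x₁ :=
      hmax.isLocalMax (Filter.mem_of_superset (hopen.mem_nhds hx₁Ω) subset_closure)
    have hvd : HasFDerivAt v (s • fderiv ℝ u x₁ - innerSL ℝ q) x₁ :=
      ((hdiff x₁).hasFDerivAt.const_mul s).sub (innerSL ℝ q).hasFDerivAt
    have h0 : s • fderiv ℝ u x₁ - innerSL ℝ q = 0 := hloc.hasFDerivAt_eq_zero hvd
    refine ⟨x₁, hx₁Ω, ?_⟩
    ext i
    have h0i := congrArg (fun (T : E2 →L[ℝ] ℝ) => T (EuclideanSpace.single i 1)) h0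
    simp only [ContinuousLinearMap.sub_apply, ContinuousLinearMap.smul_apply,
      ContinuousLinearMap.zero_apply, innerSL_apply_apply] at h0i
    have hqi : ⟪q, EuclideanSpace.single i 1⟫ = q i := by
      rw [EuclideanSpace.inner_single_right]
      simp
    rw [hqi] at h0i
    have hqi2 : q i = s * p i := rfl
    have : fderiv ℝ u x₁ (EuclideanSpace.single i 1) = p i := by
      have h1 : s * fderiv ℝ u x₁ (EuclideanSpace.single i 1) = s * p i := by
        rw [smul_eq_mul] at h0i
        rw [← hqi2]
        linarith
      exact mul_left_cancel₀ hsne h1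
    show LL (fderiv ℝ u x₁) i = p i
    rw [LL_apply]
    exact this
  -- measure-theoretic estimate
  have hmeasΩ : MeasurableSet Ω := hopen.measurableSet
  have himg : volume (G '' Ω)
      ≤ ∫⁻ y in Ω, ENNReal.ofReal |(LL.comp (fderiv ℝ (fderiv ℝ u) y)).det| :=
    addHaar_image_le_lintegral_abs_det_fderiv volume hmeasΩ
      (fun y _ => (hG y).hasFDerivWithinAt)
  have hdetc : Continuous fun y : E2 => |(LL.comp (fderiv ℝ (fderiv ℝ u) y)).det| :=
    (ContinuousLinearMap.continuous_det.comp (hf''c.const_clm_comp LL)).abs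
  have hint : IntegrableOn (fun y : E2 => |(LL.comp (fderiv ℝ (fderiv ℝ u) y)).det|) Ω :=
    ((hdetc.continuousOn).integrableOn_compact (hbdd.isCompact_closure)).mono_set
      subset_closure
  have hlint : ∫⁻ y in Ω, ENNReal.ofReal |(LL.comp (fderiv ℝ (fderiv ℝ u) y)).det|
      = ENNReal.ofReal (∫ y in Ω, |(LL.comp (fderiv ℝ (fderiv ℝ u) y)).det|) :=
    (ofReal_integral_eq_lintegral_ofReal hint
      (Filter.Eventually.of_forall fun y => abs_nonneg _)).symm
  have hchain : ENNReal.ofReal (π * ρ ^ 2)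
      ≤ ENNReal.ofReal (∫ y in Ω, |(LL.comp (fderiv ℝ (fderiv ℝ u) y)).det|) := by
    rw [← vol_ball ρ hρ0, ← hlint]
    exact le_trans (measure_mono hsub) himg
  have hJ0 : 0 ≤ ∫ y in Ω, |(LL.comp (fderiv ℝ (fderiv ℝ u) y)).det| :=
    integral_nonneg fun y => abs_nonneg _
  have hle : π * ρ ^ 2 ≤ ∫ y in Ω, |(LL.comp (fderiv ℝ (fderiv ℝ u) y)).det| :=
    (ENNReal.ofReal_le_ofReal_iff hJ0).1 hchain
  -- identify the integrand
  have hsymm : ∀ y : E2, fderiv ℝ (fderiv ℝ u) y (EuclideanSpace.single 0 1)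
        (EuclideanSpace.single 1 1)
      = fderiv ℝ (fderiv ℝ u) y (EuclideanSpace.single 1 1) (EuclideanSpace.single 0 1) :=
    fun y => second_derivative_symmetric (fun z => (hdiff z).hasFDerivAt)
      (hf'd y).hasFDerivAt _ _
  have hdet : ∀ y : E2, (LL.comp (fderiv ℝ (fderiv ℝ u) y)).det
      = fderiv ℝ (fderiv ℝ u) y (EuclideanSpace.single 0 1) (EuclideanSpace.single 0 1)
        * fderiv ℝ (fderiv ℝ u) y (EuclideanSpace.single 1 1) (EuclideanSpace.single 1 1)
      - fderiv ℝ (fderiv ℝ u) y (EuclideanSpace.single 1 1) (EuclideanSpace.single 0 1)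
        * fderiv ℝ (fderiv ℝ u) y (EuclideanSpace.single 0 1) (EuclideanSpace.single 1 1) := by
    intro y
    rw [clm_det]
    rfl
  have habs : ∀ y : E2,
      |2 * (fderiv ℝ (fderiv ℝ u) y (EuclideanSpace.single 0 1) (EuclideanSpace.single 0 1)
        * fderiv ℝ (fderiv ℝ u) y (EuclideanSpace.single 1 1) (EuclideanSpace.single 1 1)
      - (fderiv ℝ (fderiv ℝ u) y (EuclideanSpace.single 1 1) (EuclideanSpace.single 0 1)) ^ 2)|
      = 2 * |(LL.comp (fderiv ℝ (fderiv ℝ u) y)).det| := by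
    intro y
    rw [hdet y, ← hsymm y, abs_mul]
    norm_num [sq]
  have hIg : (∫ y in Ω,
      |2 * (fderiv ℝ (fderiv ℝ u) y (EuclideanSpace.single 0 1) (EuclideanSpace.single 0 1)
        * fderiv ℝ (fderiv ℝ u) y (EuclideanSpace.single 1 1) (EuclideanSpace.single 1 1)
      - (fderiv ℝ (fderiv ℝ u) y (EuclideanSpace.single 1 1) (EuclideanSpace.single 0 1)) ^ 2)|)
      = 2 * ∫ y in Ω, |(LL.comp (fderiv ℝ (fderiv ℝ u) y)).det| := by
    simp only [habs]
    exact integral_const_mul 2 _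
  -- the goal (note the cross term appears as `f'' y e₁ e₀` after the rewrite)
  rw [hIg]
  -- final algebra
  set J := ∫ y in Ω, |(LL.comp (fderiv ℝ (fderiv ℝ u) y)).det| with hJ_def
  have h1 : Real.sqrt (π * ρ ^ 2) ≤ Real.sqrt (2 * J) :=
    Real.sqrt_le_sqrt (by linarith)
  have h2 : Real.sqrt (π * ρ ^ 2) = Real.sqrt π * ρ := by
    rw [Real.sqrt_mul Real.pi_nonneg, Real.sqrt_sq hρ0]
  have hπ : 0 < Real.sqrt π := Real.sqrt_pos.2 Real.pi_pos
  have hud : |u x₀| = d * ρ := by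
    rw [hρ_def, mul_div_cancel₀ _ hd.ne']
  calc |u x₀| = d * ρ := hud
    _ = (d / Real.sqrt π) * (Real.sqrt π * ρ) := by field_simp
    _ ≤ (d / Real.sqrt π) * Real.sqrt (2 * J) := by
        apply mul_le_mul_of_nonneg_left (h2 ▸ h1) (by positivity)
end
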